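/- arXiv:1308.0248 — 3 statements merged into one kernel-verified Lean document; each statement's English description precedes it below -/
import Mathlib

section
/- The function β₂(c) = √π · Γ(2c+1/2)/Γ(c+1/2)² is strictly increasing on (0, ∞). -/
open Real Set Filter Topology

/-- The `n`-th Euler approximant of `log Γ(s) + log s`. -/
noncomputable def beta2AuxF (n : ℕ) (s : ℝ) : ℝ :=
  s * Real.log n + Real.log (Nat.factorial n) - ∑ j ∈ Finset.range n, Real.log (s + (j + 1))

lemma beta2AuxF_eq {s : ℝ} (hs : 0 < s) {n : ℕ} (hn : 1 ≤ n) :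
    beta2AuxF n s = Real.log (Real.GammaSeq s n) + Real.log s := by
  have hn' : (0:ℝ) < n := by exact_mod_cast hn
  have hfac : (0:ℝ) < (Nat.factorial n : ℝ) := by exact_mod_cast Nat.factorial_pos n
  have hterm : ∀ j ∈ Finset.range (n + 1), s + (j:ℝ) ≠ 0 := by
    intro j _
    positivity
  have hprod : (∏ j ∈ Finset.range (n + 1), (s + (j:ℝ))) ≠ 0 :=
    Finset.prod_ne_zero_iff.mpr hterm
  rw [Real.GammaSeq, Real.log_div (by positivity) hprod, Real.log_mul (by positivity) hfac.ne',
    Real.log_rpow hn', Real.log_prod hterm, Finset.sum_range_succ']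
  push_cast
  simp only [beta2AuxF]
  ring_nf

lemma beta2AuxF_tendsto {s : ℝ} (hs : 0 < s) :
    Tendsto (fun n => beta2AuxF n s) atTop
      (𝓝 (Real.log (Real.Gamma s) + Real.log s)) := by
  have h1 : Tendsto (fun n => Real.log (Real.GammaSeq s n) + Real.log s) atTop
      (𝓝 (Real.log (Real.Gamma s) + Real.log s)) := by
    exact (((Real.continuousAt_log (Real.Gamma_pos_of_pos hs).ne').tendsto).comp
      (Real.GammaSeq_tendsto_Gamma s)).add_const _
  refine h1.congr' ?_
  filter_upwards [eventually_ge_atTop 1] with n hn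
  exact (beta2AuxF_eq hs hn).symm

lemma beta2AuxF_convex_ineq (n : ℕ) {x y a b : ℝ} (hx : 0 < x) (hy : 0 < y)
    (ha : 0 ≤ a) (hb : 0 ≤ b) (hab : a + b = 1) :
    beta2AuxF n (a * x + b * y) ≤ a * beta2AuxF n x + b * beta2AuxF n y := by
  have hsum : ∀ j ∈ Finset.range n,
      a * Real.log (x + (j + 1)) + b * Real.log (y + (j + 1))
        ≤ Real.log (a * x + b * y + (j + 1)) := by
    intro j _
    have hxj : (x + ((j:ℝ) + 1)) ∈ Ioi (0:ℝ) := by simp only [mem_Ioi]; positivity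
    have hyj : (y + ((j:ℝ) + 1)) ∈ Ioi (0:ℝ) := by simp only [mem_Ioi]; positivity
    have := strictConcaveOn_log_Ioi.concaveOn.2 hxj hyj ha hb hab
    simp only [smul_eq_mul] at this
    have harg : a * (x + ((j:ℝ) + 1)) + b * (y + ((j:ℝ) + 1))
        = a * x + b * y + ((j:ℝ) + 1) := by nlinarith [hab]
    rwa [harg] at this
  have hS : ∑ j ∈ Finset.range n, (a * Real.log (x + (j + 1)) + b * Real.log (y + (j + 1)))
      ≤ ∑ j ∈ Finset.range n, Real.log (a * x + b * y + (j + 1)) :=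
    Finset.sum_le_sum hsum
  rw [Finset.sum_add_distrib, ← Finset.mul_sum, ← Finset.mul_sum] at hS
  have hC : a * Real.log (Nat.factorial n) + b * Real.log (Nat.factorial n)
      = Real.log (Nat.factorial n) := by rw [← add_mul, hab, one_mul]
  simp only [beta2AuxF]
  nlinarith [hS, hC]

lemma beta2_convexOn_logGamma_add_log :
    ConvexOn ℝ (Ioi 0) (fun s : ℝ => Real.log (Real.Gamma s) + Real.log s) := by
  refine ⟨convex_Ioi 0, fun x hx y hy a b ha hb hab => ?_⟩
  simp only [smul_eq_mul]
  have hz : (0:ℝ) < a * x + b * y :=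
    lt_of_lt_of_le (lt_min hx hy) (Convex.min_le_combo x y ha hb hab)
  exact le_of_tendsto_of_tendsto' (beta2AuxF_tendsto hz)
    (((beta2AuxF_tendsto hx).const_mul a).add ((beta2AuxF_tendsto hy).const_mul b))
    (fun n => beta2AuxF_convex_ineq n hx hy ha hb hab)

lemma beta2_strictConvexOn_logGamma :
    StrictConvexOn ℝ (Ioi 0) (fun s : ℝ => Real.log (Real.Gamma s)) := by
  have h := beta2_convexOn_logGamma_add_log.add_strictConvexOn strictConcaveOn_log_Ioi.neg
  have heq : ((fun s : ℝ => Real.log (Real.Gamma s) + Real.log s) + -Real.log)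
      = fun s : ℝ => Real.log (Real.Gamma s) := by
    funext s
    simp [Pi.add_apply, Pi.neg_apply]
  rwa [heq] at h

/-- Equal-length increments of a strictly convex function are strictly increasing. -/
lemma beta2_shift_lt {g : ℝ → ℝ} (hg : StrictConvexOn ℝ (Ioi 0) g)
    {p q h : ℝ} (hp : 0 < p) (hpq : p < q) (hh : 0 < h) :
    g (p + h) - g p < g (q + h) - g q := by
  have hq : 0 < q := hp.trans hpq
  have hp' : p ∈ Ioi (0:ℝ) := hp
  have hq' : q ∈ Ioi (0:ℝ) := hq
  have hph : p + h ∈ Ioi (0:ℝ) := by simp only [mem_Ioi]; positivity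
  have hqh : q + h ∈ Ioi (0:ℝ) := by simp only [mem_Ioi]; positivity
  have h1 : (g (p + h) - g p) / (p + h - p) < (g (q + h) - g p) / (q + h - p) :=
    hg.secant_strict_mono hp' hph hqh (by linarith) (by linarith) (by linarith)
  have h2 : (g p - g (q + h)) / (p - (q + h)) < (g q - g (q + h)) / (q - (q + h)) :=
    hg.secant_strict_mono hqh hp' hq' (by linarith) (by linarith) hpq
  have h2' : (g (q + h) - g p) / (q + h - p) < (g (q + h) - g q) / h := by
    have e1 : (g p - g (q + h)) / (p - (q + h)) = (g (q + h) - g p) / (q + h - p) := by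
      rw [← neg_div_neg_eq]; ring_nf
    have e2 : (g q - g (q + h)) / (q - (q + h)) = (g (q + h) - g q) / h := by
      rw [← neg_div_neg_eq]; ring_nf
    rwa [e1, e2] at h2
  have h3 : (g (p + h) - g p) / h < (g (q + h) - g q) / h := by
    have : p + h - p = h := by ring
    rw [this] at h1
    exact h1.trans h2'
  exact (div_lt_div_iff_of_pos_right hh).mp h3

/-- `β₂(c) = √π Γ(2c+1/2)/Γ(c+1/2)²` is strictly increasing on `(0, ∞)`. -/
theorem beta2_strictMonoOn :
    StrictMonoOn
      (fun c : ℝ => Real.sqrt Real.pi * Real.Gamma (2 * c + 1 / 2) / Real.Gamma (c + 1 / 2) ^ 2)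
      (Set.Ioi 0) := by
  intro x hx y hy hxy
  simp only [mem_Ioi] at hx hy
  set g : ℝ → ℝ := fun s => Real.log (Real.Gamma s) with hg
  have hgc := beta2_strictConvexOn_logGamma
  -- first increment comparison : shift by x
  have h1 : g (x + 1/2 + (y - x)) - g (x + 1/2) < g (2*x + 1/2 + (y - x)) - g (2*x + 1/2) :=
    beta2_shift_lt hgc (by linarith) (by linarith) (by linarith)
  -- second : shift by y
  have h2 : g (x + 1/2 + (y - x)) - g (x + 1/2) < g (x + y + 1/2 + (y - x)) - g (x + y + 1/2) :=
    beta2_shift_lt hgc (by linarith) (by linarith) (by linarith)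
  have e1 : x + 1/2 + (y - x) = y + 1/2 := by ring
  have e2 : 2*x + 1/2 + (y - x) = x + y + 1/2 := by ring
  have e3 : x + y + 1/2 + (y - x) = 2*y + 1/2 := by ring
  rw [e1, e2] at h1
  rw [e1, e3] at h2
  -- combined log inequality
  have key : g (2*x + 1/2) + 2 * g (y + 1/2) < g (2*y + 1/2) + 2 * g (x + 1/2) := by
    linarith
  -- positivity facts
  have G1 : 0 < Real.Gamma (2*x + 1/2) := Real.Gamma_pos_of_pos (by linarith)
  have G2 : 0 < Real.Gamma (2*y + 1/2) := Real.Gamma_pos_of_pos (by linarith)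
  have G3 : 0 < Real.Gamma (x + 1/2) := Real.Gamma_pos_of_pos (by linarith)
  have G4 : 0 < Real.Gamma (y + 1/2) := Real.Gamma_pos_of_pos (by linarith)
  have hsqrt : 0 < Real.sqrt Real.pi := Real.sqrt_pos.mpr Real.pi_pos
  -- product inequality from the log inequality
  have hprod : Real.Gamma (2*x + 1/2) * Real.Gamma (y + 1/2) ^ 2
      < Real.Gamma (2*y + 1/2) * Real.Gamma (x + 1/2) ^ 2 := by
    have hl : Real.log (Real.Gamma (2*x + 1/2) * Real.Gamma (y + 1/2) ^ 2)
        < Real.log (Real.Gamma (2*y + 1/2) * Real.Gamma (x + 1/2) ^ 2) := by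
      rw [Real.log_mul G1.ne' (by positivity), Real.log_mul G2.ne' (by positivity),
        Real.log_pow, Real.log_pow]
      push_cast
      simpa [hg] using key
    exact (Real.log_lt_log_iff (by positivity) (by positivity)).mp hl
  simp only
  rw [div_lt_div_iff₀ (by positivity) (by positivity)]
  calc Real.sqrt Real.pi * Real.Gamma (2*x + 1/2) * Real.Gamma (y + 1/2) ^ 2
      = Real.sqrt Real.pi * (Real.Gamma (2*x + 1/2) * Real.Gamma (y + 1/2) ^ 2) := by ring
    _ < Real.sqrt Real.pi * (Real.Gamma (2*y + 1/2) * Real.Gamma (x + 1/2) ^ 2) := by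
        exact (mul_lt_mul_iff_right₀ hsqrt).mpr hprod
    _ = Real.sqrt Real.pi * Real.Gamma (2*y + 1/2) * Real.Gamma (x + 1/2) ^ 2 := by ring
end

section
/- For c = 3/5, the value √π · Γ(2c+1/2)/Γ(c+1/2)² is strictly less than 3, and for c = 7/5 it is strictly greater than 3. -/
open Real

/-- Log-convexity interpolation inequality for the Gamma function. -/
lemma gamma_interp {x y a b : ℝ} (hx : 0 < x) (hy : 0 < y) (ha : 0 < a) (hb : 0 < b)
    (hab : a + b = 1) :
    Real.Gamma (a * x + b * y) ≤ Real.Gamma x ^ a * Real.Gamma y ^ b := by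
  have h := Real.convexOn_log_Gamma.2 (Set.mem_Ioi.mpr hx) (Set.mem_Ioi.mpr hy)
    ha.le hb.le hab
  simp only [smul_eq_mul, Function.comp_apply] at h
  have hpos : 0 < a * x + b * y := by positivity
  have hg := Real.Gamma_pos_of_pos hpos
  calc Real.Gamma (a * x + b * y) = Real.exp (Real.log (Real.Gamma (a * x + b * y))) :=
        (Real.exp_log hg).symm
    _ ≤ Real.exp (a * Real.log (Real.Gamma x) + b * Real.log (Real.Gamma y)) :=
        Real.exp_le_exp.2 h
    _ = Real.Gamma x ^ a * Real.Gamma y ^ b := by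
        rw [Real.exp_add, Real.rpow_def_of_pos (Real.Gamma_pos_of_pos hx),
          Real.rpow_def_of_pos (Real.Gamma_pos_of_pos hy), mul_comm a, mul_comm b]

/-- `β₂(3/5) < 3` and `β₂(7/5) > 3`, where `β₂(c) = √π Γ(2c+1/2)/Γ(c+1/2)²`. -/
theorem beta2_lt_three_and_gt_three :
    Real.sqrt Real.pi * Real.Gamma (2 * (3 / 5) + 1 / 2) / Real.Gamma ((3 / 5) + 1 / 2) ^ 2 < 3 ∧
    3 < Real.sqrt Real.pi * Real.Gamma (2 * (7 / 5) + 1 / 2) / Real.Gamma ((7 / 5) + 1 / 2) ^ 2 := by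
  have hs : (0:ℝ) < Real.sqrt Real.pi := Real.sqrt_pos.mpr Real.pi_pos
  set q : ℝ := Real.sqrt Real.pi / 2 with hq_def
  have hq : (0:ℝ) < q := by positivity
  have hq2 : q ^ 2 = Real.pi / 4 := by
    rw [hq_def, div_pow, Real.sq_sqrt Real.pi_pos.le]; norm_num
  have hG2 : Real.Gamma 2 = 1 := by
    have := Real.Gamma_add_one (s := 1) one_ne_zero
    norm_num [Real.Gamma_one] at this
    norm_num [this]
  have hG32 : Real.Gamma (3/2) = q := by
    have := Real.Gamma_add_one (s := (1:ℝ)/2) (by norm_num)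
    rw [Real.Gamma_one_half_eq] at this
    norm_num at this
    rw [this, hq_def]
    ring
  -- upper bound Γ(17/10) ≤ q^(3/5)
  have h17 : Real.Gamma (17/10) ≤ q ^ ((3:ℝ)/5) := by
    have h := gamma_interp (x := 3/2) (y := 2) (a := 3/5) (b := 2/5)
      (by norm_num) (by norm_num) (by norm_num) (by norm_num) (by norm_num)
    rw [show (3:ℝ)/5 * (3/2) + 2/5 * 2 = 17/10 by norm_num, hG32, hG2,
      Real.one_rpow, mul_one] at h
    exact h
  -- lower bound Γ(11/10) ≥ q^(9/5)
  have h11 : q ^ ((9:ℝ)/5) ≤ Real.Gamma (11/10) := by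
    have h := gamma_interp (x := 11/10) (y := 2) (a := 5/9) (b := 4/9)
      (by norm_num) (by norm_num) (by norm_num) (by norm_num) (by norm_num)
    rw [show (5:ℝ)/9 * (11/10) + 4/9 * 2 = 3/2 by norm_num, hG32, hG2,
      Real.one_rpow, mul_one] at h
    have := Real.rpow_le_rpow hq.le h (by norm_num : (0:ℝ) ≤ 9/5)
    rw [← Real.rpow_mul (Real.Gamma_pos_of_pos (by norm_num : (0:ℝ) < 11/10)).le] at this
    norm_num at this
    exact this
  -- lower bound Γ(13/10) ≥ q^(7/5)
  have h13 : q ^ ((7:ℝ)/5) ≤ Real.Gamma (13/10) := by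
    have h := gamma_interp (x := 13/10) (y := 2) (a := 5/7) (b := 2/7)
      (by norm_num) (by norm_num) (by norm_num) (by norm_num) (by norm_num)
    rw [show (5:ℝ)/7 * (13/10) + 2/7 * 2 = 3/2 by norm_num, hG32, hG2,
      Real.one_rpow, mul_one] at h
    have := Real.rpow_le_rpow hq.le h (by norm_num : (0:ℝ) ≤ 7/5)
    rw [← Real.rpow_mul (Real.Gamma_pos_of_pos (by norm_num : (0:ℝ) < 13/10)).le] at this
    norm_num at this
    exact this
  -- upper bound Γ(19/10) ≤ q^(1/5)
  have h19 : Real.Gamma (19/10) ≤ q ^ ((1:ℝ)/5) := by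
    have h := gamma_interp (x := 3/2) (y := 2) (a := 1/5) (b := 4/5)
      (by norm_num) (by norm_num) (by norm_num) (by norm_num) (by norm_num)
    rw [show (1:ℝ)/5 * (3/2) + 4/5 * 2 = 19/10 by norm_num, hG32, hG2,
      Real.one_rpow, mul_one] at h
    exact h
  have hP : (3:ℝ) < Real.pi := Real.pi_gt_three
  constructor
  · -- first part
    rw [show 2 * ((3:ℝ)/5) + 1/2 = 17/10 by norm_num, show (3:ℝ)/5 + 1/2 = 11/10 by norm_num]
    have hden : (0:ℝ) < Real.Gamma (11/10) ^ 2 :=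
      pow_pos (Real.Gamma_pos_of_pos (by norm_num)) 2
    rw [div_lt_iff₀ hden]
    have hQpos : (0:ℝ) < q ^ ((8:ℝ)/5) := Real.rpow_pos_of_pos hq _
    have hA : Real.sqrt Real.pi * Real.Gamma (17/10) ≤ 2 * q ^ ((8:ℝ)/5) := by
      have : Real.sqrt Real.pi * Real.Gamma (17/10) ≤ Real.sqrt Real.pi * q ^ ((3:ℝ)/5) :=
        mul_le_mul_of_nonneg_left h17 hs.le
      calc Real.sqrt Real.pi * Real.Gamma (17/10) ≤ Real.sqrt Real.pi * q ^ ((3:ℝ)/5) := this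
        _ = 2 * q ^ ((8:ℝ)/5) := by
            rw [show Real.sqrt Real.pi = 2 * q by rw [hq_def]; ring,
              show (8:ℝ)/5 = 1 + 3/5 by norm_num, Real.rpow_add hq, Real.rpow_one]
            ring
    have hB : q ^ ((8:ℝ)/5) * q ^ 2 ≤ Real.Gamma (11/10) ^ 2 := by
      have h2 : (q ^ ((9:ℝ)/5)) ^ 2 ≤ Real.Gamma (11/10) ^ 2 :=
        pow_le_pow_left₀ (Real.rpow_pos_of_pos hq _).le h11 2
      have e : (q ^ ((9:ℝ)/5)) ^ 2 = q ^ ((8:ℝ)/5) * q ^ 2 := by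
        rw [← Real.rpow_natCast (q ^ ((9:ℝ)/5)) 2, ← Real.rpow_mul hq.le,
          ← Real.rpow_natCast q 2, ← Real.rpow_add hq]
        norm_num
      linarith [e ▸ h2]
    nlinarith [hA, hB, hq2, hP, hQpos]
  · -- second part
    rw [show 2 * ((7:ℝ)/5) + 1/2 = 33/10 by norm_num, show (7:ℝ)/5 + 1/2 = 19/10 by norm_num]
    have hden : (0:ℝ) < Real.Gamma (19/10) ^ 2 :=
      pow_pos (Real.Gamma_pos_of_pos (by norm_num)) 2
    rw [lt_div_iff₀ hden]
    have hQpos : (0:ℝ) < q ^ ((2:ℝ)/5) := Real.rpow_pos_of_pos hq _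
    have e33 : Real.Gamma (33/10) = 23/10 * (13/10 * Real.Gamma (13/10)) := by
      rw [show (33:ℝ)/10 = 23/10 + 1 by norm_num,
        Real.Gamma_add_one (by norm_num : (23:ℝ)/10 ≠ 0),
        show (23:ℝ)/10 = 13/10 + 1 by norm_num,
        Real.Gamma_add_one (by norm_num : (13:ℝ)/10 ≠ 0)]
    have hC : Real.Gamma (19/10) ^ 2 ≤ q ^ ((2:ℝ)/5) := by
      have h2 : Real.Gamma (19/10) ^ 2 ≤ (q ^ ((1:ℝ)/5)) ^ 2 :=
        pow_le_pow_left₀ (Real.Gamma_pos_of_pos (by norm_num)).le h19 2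
      have e : (q ^ ((1:ℝ)/5)) ^ 2 = q ^ ((2:ℝ)/5) := by
        rw [← Real.rpow_natCast (q ^ ((1:ℝ)/5)) 2, ← Real.rpow_mul hq.le]
        norm_num
      linarith [e ▸ h2]
    have hD : 299/50 * (q ^ ((2:ℝ)/5) * q ^ 2) ≤ Real.sqrt Real.pi * Real.Gamma (33/10) := by
      have key : q * q ^ ((7:ℝ)/5) = q ^ ((2:ℝ)/5) * q ^ 2 := by
        have e1 : q ^ ((12:ℝ)/5) = q * q ^ ((7:ℝ)/5) := by
          rw [show (12:ℝ)/5 = 1 + 7/5 by norm_num, Real.rpow_add hq, Real.rpow_one]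
        have e2 : q ^ ((12:ℝ)/5) = q ^ ((2:ℝ)/5) * q ^ 2 := by
          rw [← Real.rpow_natCast q 2, ← Real.rpow_add hq]
          norm_num
        linarith
      have hmul : 299/100 * q ^ ((7:ℝ)/5) ≤ 299/100 * Real.Gamma (13/10) := by
        nlinarith [h13]
      calc 299/50 * (q ^ ((2:ℝ)/5) * q ^ 2) = 2 * q * (299/100 * q ^ ((7:ℝ)/5)) := by
            rw [← key]; ring
        _ ≤ 2 * q * (299/100 * Real.Gamma (13/10)) := by
            have h2q : (0:ℝ) ≤ 2 * q := by positivity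
            exact mul_le_mul_of_nonneg_left hmul h2q
        _ = Real.sqrt Real.pi * Real.Gamma (33/10) := by
            rw [e33, show Real.sqrt Real.pi = 2 * q by rw [hq_def]; ring]
            ring
    nlinarith [hC, hD, hq2, hP, hQpos]
end

section
/- The function c ↦ log Γ(2c+1/2) − 2 log Γ(c+1/2) is strictly convex on (0,∞). -/
open Real Set Filter Finset Topology

noncomputable def tTerm (b : ℝ) : ℝ → ℝ :=
  fun c => 2 * Real.log (c + b + 1/2) - Real.log (c + b + 1/4) - Real.log (c + b + 3/4)

lemma tTerm_strictConvexOn (b : ℝ) (hb : 0 ≤ b) :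
    StrictConvexOn ℝ (Set.Ioi (0:ℝ)) (tTerm b) := by
  set g : ℝ → ℝ := fun c => 2 * (c + b + 1/2)⁻¹ - (c + b + 1/4)⁻¹ - (c + b + 3/4)⁻¹ with hg
  have hpos : ∀ x : ℝ, 0 < x → 0 < x + b + 1/4 ∧ 0 < x + b + 1/2 ∧ 0 < x + b + 3/4 := by
    intro x hx; refine ⟨by linarith, by linarith, by linarith⟩
  have hd : ∀ x ∈ Set.Ioi (0:ℝ), HasDerivAt (tTerm b) (g x) x := by
    intro x hx
    obtain ⟨h1, h2, h3⟩ := hpos x hx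
    have d2 : HasDerivAt (fun c : ℝ => Real.log (c + b + 1/2)) (1 / (x + b + 1/2)) x := by
      simpa using (((hasDerivAt_id x).add_const b).add_const (1/2)).log h2.ne'
    have d1 : HasDerivAt (fun c : ℝ => Real.log (c + b + 1/4)) (1 / (x + b + 1/4)) x := by
      simpa using (((hasDerivAt_id x).add_const b).add_const (1/4)).log h1.ne'
    have d3 : HasDerivAt (fun c : ℝ => Real.log (c + b + 3/4)) (1 / (x + b + 3/4)) x := by
      simpa using (((hasDerivAt_id x).add_const b).add_const (3/4)).log h3.ne'
    have := ((d2.const_mul 2).sub d1).sub d3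
    refine this.congr_deriv ?_
    simp only [g]
    ring
  have hd2 : ∀ x ∈ Set.Ioi (0:ℝ), HasDerivAt g
      (-2 / (x + b + 1/2)^2 + 1 / (x + b + 1/4)^2 + 1 / (x + b + 3/4)^2) x := by
    intro x hx
    obtain ⟨h1, h2, h3⟩ := hpos x hx
    have d2 : HasDerivAt (fun c : ℝ => (c + b + 1/2)⁻¹) (-1 / (x + b + 1/2)^2) x := by
      simpa [Pi.inv_def] using (((hasDerivAt_id x).add_const b).add_const (1/2)).inv h2.ne'
    have d1 : HasDerivAt (fun c : ℝ => (c + b + 1/4)⁻¹) (-1 / (x + b + 1/4)^2) x := by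
      simpa [Pi.inv_def] using (((hasDerivAt_id x).add_const b).add_const (1/4)).inv h1.ne'
    have d3 : HasDerivAt (fun c : ℝ => (c + b + 3/4)⁻¹) (-1 / (x + b + 3/4)^2) x := by
      simpa [Pi.inv_def] using (((hasDerivAt_id x).add_const b).add_const (3/4)).inv h3.ne'
    have := ((d2.const_mul 2).sub d1).sub d3
    refine this.congr_deriv ?_
    ring
  have hEq : Set.EqOn (deriv (tTerm b)) g (Set.Ioi 0) := fun x hx => (hd x hx).deriv
  refine strictConvexOn_of_deriv2_pos (convex_Ioi 0)
    (fun x hx => (hd x hx).continuousAt.continuousWithinAt) (fun x hx => ?_)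
  rw [interior_Ioi] at hx
  have hxx : deriv (deriv (tTerm b)) x = deriv g x :=
    (hEq.eventuallyEq_of_mem (isOpen_Ioi.mem_nhds hx)).deriv_eq
  have : deriv^[2] (tTerm b) x = deriv g x := by
    simp only [Function.iterate_succ, Function.iterate_zero, Function.comp_apply, id]
    exact hxx
  rw [this, (hd2 x hx).deriv]
  obtain ⟨h1, h2, h3⟩ := hpos x hx
  rw [show (-2 / (x + b + 1/2)^2 + 1 / (x + b + 1/4)^2 + 1 / (x + b + 3/4)^2)
      = (1 / (x + b + 1/4)^2 + 1 / (x + b + 3/4)^2) - 2 / (x + b + 1/2)^2 by ring, sub_pos,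
    div_add_div _ _ (by positivity) (by positivity), div_lt_div_iff₀ (by positivity) (by positivity)]
  nlinarith [sq_nonneg (x+b), mul_pos h1 h3, mul_pos (mul_pos h1 h3) (mul_pos h1 h3), sq_nonneg x, mul_pos hx (hx.trans_le (le_refl x))]

lemma tendsto_sum_tTerm {c : ℝ} (hc : 0 < c) :
    Tendsto (fun n : ℕ => ∑ m ∈ Finset.range (n+1), tTerm m c) atTop
      (𝓝 (Real.log (Real.Gamma (c+1/4)) + Real.log (Real.Gamma (c+3/4))
        - 2 * Real.log (Real.Gamma (c+1/2)))) := by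
  have h14 := Real.BohrMollerup.tendsto_log_gamma (show (0:ℝ) < c + 1/4 by linarith)
  have h34 := Real.BohrMollerup.tendsto_log_gamma (show (0:ℝ) < c + 3/4 by linarith)
  have h12 := Real.BohrMollerup.tendsto_log_gamma (show (0:ℝ) < c + 1/2 by linarith)
  have key := (h14.add h34).sub (h12.const_mul 2)
  convert key using 2 with n
  simp only [Real.BohrMollerup.logGammaSeq, tTerm]
  have hsum : ∑ m ∈ Finset.range (n+1),
      (2 * Real.log (c + (m:ℝ) + 1/2) - Real.log (c + (m:ℝ) + 1/4) - Real.log (c + (m:ℝ) + 3/4))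
      = 2 * ∑ m ∈ Finset.range (n+1), Real.log (c + 1/2 + (m:ℝ))
        - ∑ m ∈ Finset.range (n+1), Real.log (c + 1/4 + (m:ℝ))
        - ∑ m ∈ Finset.range (n+1), Real.log (c + 3/4 + (m:ℝ)) := by
    rw [Finset.mul_sum, ← Finset.sum_sub_distrib, ← Finset.sum_sub_distrib]
    exact Finset.sum_congr rfl fun m _ => by ring_nf
  rw [hsum]
  ring

noncomputable def Gfun : ℝ → ℝ := fun c =>
  Real.log (Real.Gamma (c+1/4)) + Real.log (Real.Gamma (c+3/4))
    - 2 * Real.log (Real.Gamma (c+1/2))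

lemma convexOn_partial (n : ℕ) :
    ConvexOn ℝ (Set.Ioi (0:ℝ)) (fun z => ∑ m ∈ Finset.range n, tTerm ((m:ℝ)+1) z) := by
  induction n with
  | zero => simpa using convexOn_const 0 (convex_Ioi (0:ℝ))
  | succ n ih =>
    have h := ih.add (tTerm_strictConvexOn ((n:ℝ)+1) (by positivity)).convexOn
    convert h using 1
    · rfl
    funext z
    simp [Finset.sum_range_succ]

lemma convexOn_Rfun : ConvexOn ℝ (Set.Ioi (0:ℝ)) (fun c => Gfun c - tTerm 0 c) := by
  have hlim : ∀ z ∈ Set.Ioi (0:ℝ),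
      Tendsto (fun n : ℕ => ∑ m ∈ Finset.range n, tTerm ((m:ℝ)+1) z) atTop
        (𝓝 (Gfun z - tTerm 0 z)) := by
    intro z hz
    have h := (tendsto_sum_tTerm hz).sub_const (tTerm 0 z)
    refine h.congr fun n => ?_
    rw [Finset.sum_range_succ']
    push_cast
    ring
  refine ⟨convex_Ioi 0, fun x hx y hy a b ha hb hab => ?_⟩
  have hmem : a • x + b • y ∈ Set.Ioi (0:ℝ) := (convex_Ioi 0) hx hy ha hb hab
  refine le_of_tendsto_of_tendsto' (hlim _ hmem)
    (((hlim x hx).const_mul a).add ((hlim y hy).const_mul b)) fun n => ?_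
  have := (convexOn_partial n).2 hx hy ha hb hab
  simpa [smul_eq_mul] using this

lemma strictConvexOn_Gfun : StrictConvexOn ℝ (Set.Ioi (0:ℝ)) Gfun := by
  have h := (tTerm_strictConvexOn 0 le_rfl).add_convexOn convexOn_Rfun
  have he : (tTerm 0 + fun c => Gfun c - tTerm 0 c) = Gfun := by
    funext c; simp [Pi.add_apply]
  rwa [he] at h

/-- The function `c ↦ log Γ(2c+1/2) − 2 log Γ(c+1/2)` is strictly convex on `(0,∞)`. -/
theorem logBeta2_strictConvexOn :
    StrictConvexOn ℝ (Set.Ioi (0 : ℝ))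
      (fun c : ℝ => Real.log (Real.Gamma (2 * c + 1 / 2)) -
        2 * Real.log (Real.Gamma (c + 1 / 2))) := by
  set K : ℝ := -(1/2) * Real.log 2 - Real.log (Real.sqrt π) with hK
  have haff : ConvexOn ℝ (Set.Ioi (0:ℝ)) (fun c => (2 * Real.log 2) * c + K) := by
    refine ⟨convex_Ioi 0, fun x hx y hy a b ha hb hab => le_of_eq ?_⟩
    simp only [smul_eq_mul]
    linear_combination (-K) * hab
  have hg := strictConvexOn_Gfun.add_convexOn haff
  refine ⟨hg.1, fun x hx y hy hxy a b ha hb hab => ?_⟩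
  have hmem : a • x + b • y ∈ Set.Ioi (0:ℝ) := (convex_Ioi 0) hx hy ha.le hb.le hab
  have key : ∀ c ∈ Set.Ioi (0:ℝ),
      Real.log (Real.Gamma (2 * c + 1 / 2)) - 2 * Real.log (Real.Gamma (c + 1 / 2))
        = (Gfun + fun c => (2 * Real.log 2) * c + K) c := by
    intro c hc
    have hc' : (0:ℝ) < c := hc
    have hdup := Real.Gamma_mul_Gamma_add_half (c + 1/4)
    have e1 : c + 1/4 + 1/2 = c + 3/4 := by ring
    have e2 : 2 * (c + 1/4) = 2 * c + 1/2 := by ring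
    have e3 : 1 - (2 * c + 1/2) = 1/2 - 2 * c := by ring
    rw [e1, e2, e3] at hdup
    have p1 : (0:ℝ) < Real.Gamma (c + 1/4) := Real.Gamma_pos_of_pos (by linarith)
    have p3 : (0:ℝ) < Real.Gamma (c + 3/4) := Real.Gamma_pos_of_pos (by linarith)
    have p2 : (0:ℝ) < Real.Gamma (2 * c + 1/2) := Real.Gamma_pos_of_pos (by linarith)
    have ppow : (0:ℝ) < (2:ℝ) ^ (1/2 - 2*c) := Real.rpow_pos_of_pos two_pos _
    have psqrt : (0:ℝ) < Real.sqrt π := Real.sqrt_pos.mpr Real.pi_pos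
    have hlog : Real.log (Real.Gamma (c+1/4)) + Real.log (Real.Gamma (c+3/4))
        = Real.log (Real.Gamma (2*c+1/2)) + (1/2 - 2*c) * Real.log 2
          + Real.log (Real.sqrt π) := by
      rw [← Real.log_mul p1.ne' p3.ne', hdup, Real.log_mul (by positivity) psqrt.ne',
        Real.log_mul p2.ne' ppow.ne', Real.log_rpow two_pos]
    simp only [Gfun, Pi.add_apply, hK]
    rw [show (2:ℝ) * c + 1/2 = 2*c + 1/2 by ring] at hlog ⊢
    linarith [hlog]
  beta_reduce
  rw [key x hx, key y hy, key _ hmem]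
  exact hg.2 hx hy hxy ha hb hab
end
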